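/- Let R be a root system of a complex simple Lie algebra with compact/noncompact partition coming from a symmetric pair, and fix a base Π with Π_nc the set of noncompact simple roots. Suppose condition (*): for every ψ ∈ Π_nc there exists ψ' ∈ Π_nc with ψ + ψ' ∈ R, and suppose no nonzero element of 𝔨 centralizes 𝔭. Then there exist strictly positive real numbers (g_α)_{α ∈ R⁺} such that Σ_{α ∈ R_𝔨⁺} g_α α = Σ_{α ∈ R_𝔭⁺} g_α α. -/

import Mathlib

open scoped BigOperators

set_option linter.unusedSectionVars false

section Aux
variable {V : Type*} [AddCommGroup V] [Module ℝ V]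

lemma exists_scale (T : Finset V) (s t : V → ℝ) (hs : ∀ α ∈ T, 0 < s α) :
    ∃ M : ℝ, 0 ≤ M ∧ ∀ α ∈ T, 0 < M * s α + t α := by
  classical
  induction T using Finset.induction_on with
  | empty => exact ⟨0, le_refl 0, by simp⟩
  | @insert a T' ha ih =>
    obtain ⟨M', hM'0, hM'⟩ := ih (fun α hα => hs α (Finset.mem_insert_of_mem hα))
    have hsa : 0 < s a := hs a (Finset.mem_insert_self a T')
    refine ⟨max M' ((1 + |t a|) / s a), le_trans hM'0 (le_max_left _ _), ?_⟩
    intro α hα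
    rcases Finset.mem_insert.mp hα with rfl | hα'
    · have h1 : ((1 + |t α|) / s α) * s α = 1 + |t α| := div_mul_cancel₀ _ (ne_of_gt hsa)
      have h2 : ((1 + |t α|) / s α) * s α ≤ max M' ((1 + |t α|) / s α) * s α :=
        mul_le_mul_of_nonneg_right (le_max_right _ _) hsa.le
      have h3 := neg_abs_le (t α)
      linarith
    · have h1 := hM' α hα'
      have h2 : M' * s α ≤ max M' ((1 + |t a|) / s a) * s α :=
        mul_le_mul_of_nonneg_right (le_max_left _ _) (hs α hα).le
      linarith

lemma sum_if_smul [DecidableEq V] (S : Finset V) (v : V) (t : ℝ) :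
    ∑ α ∈ S, (if α = v then t else 0) • α = if v ∈ S then t • v else 0 := by
  simp only [ite_smul, zero_smul]
  exact Finset.sum_ite_eq' S v (fun α => t • α)

lemma combine [DecidableEq V] (K P : Finset V) (rank : V → ℕ) (N : ℕ)
    (hN : ∀ α ∈ K ∪ P, rank α < N)
    (hrel : ∀ ρ ∈ K ∪ P, ∃ r : V → ℝ,
      (∑ α ∈ K, r α • α = ∑ α ∈ P, r α • α) ∧ 0 < r ρ ∧
      ∀ α, rank ρ ≤ rank α → α ≠ ρ → 0 ≤ r α) :
    ∃ g : V → ℝ, (∀ α ∈ K ∪ P, 0 < g α) ∧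
      ∑ α ∈ K, g α • α = ∑ α ∈ P, g α • α := by
  classical
  have hrel' : ∀ ρ : V, ∃ r : V → ℝ, ρ ∈ K ∪ P →
      ((∑ α ∈ K, r α • α = ∑ α ∈ P, r α • α) ∧ 0 < r ρ ∧
        ∀ α, rank ρ ≤ rank α → α ≠ ρ → 0 ≤ r α) := by
    intro ρ
    by_cases h : ρ ∈ K ∪ P
    · obtain ⟨r, hr⟩ := hrel ρ h
      exact ⟨r, fun _ => hr⟩
    · exact ⟨0, fun h' => absurd h' h⟩
  choose rel hrelp using hrel'
  have key : ∀ m : ℕ, ∃ s : V → ℝ,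
      (∑ α ∈ K, s α • α = ∑ α ∈ P, s α • α) ∧
      (∀ α ∈ K ∪ P, 0 ≤ s α) ∧ (∀ α ∈ K ∪ P, rank α < m → 0 < s α) := by
    intro m
    induction m with
    | zero => exact ⟨0, by simp, by simp, by simp⟩
    | succ m ih =>
      obtain ⟨s, hseq, hs0, hspos⟩ := ih
      set L := (K ∪ P).filter (fun ρ => rank ρ = m) with hL
      set t : V → ℝ := fun α => ∑ ρ ∈ L, rel ρ α with ht
      have hLmem : ∀ ρ ∈ L, ρ ∈ K ∪ P ∧ rank ρ = m := by
        intro ρ hρ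
        exact ⟨(Finset.mem_filter.mp hρ).1, (Finset.mem_filter.mp hρ).2⟩
      have hteq : ∑ α ∈ K, t α • α = ∑ α ∈ P, t α • α := by
        have h1 : ∀ S : Finset V, ∑ α ∈ S, t α • α = ∑ ρ ∈ L, ∑ α ∈ S, rel ρ α • α := by
          intro S
          rw [Finset.sum_congr rfl (fun α _ => (Finset.sum_smul : (∑ ρ ∈ L, rel ρ α) • α = _))]
          exact Finset.sum_comm
        rw [h1 K, h1 P]
        exact Finset.sum_congr rfl fun ρ hρ => ((hrelp ρ (hLmem ρ hρ).1).1)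
      -- nonnegativity of t at high rank
      have htnn : ∀ α, m ≤ rank α → α ∉ L → 0 ≤ t α := by
        intro α hm hαL
        apply Finset.sum_nonneg
        intro ρ hρ
        obtain ⟨hρKP, hρm⟩ := hLmem ρ hρ
        refine (hrelp ρ hρKP).2.2 α (hρm ▸ hm) ?_
        intro h; exact hαL (h ▸ hρ)
      have htpos : ∀ α ∈ L, 0 < t α := by
        intro α hα
        obtain ⟨hαKP, hαm⟩ := hLmem α hα
        have := Finset.sum_erase_add L (fun ρ => rel ρ α) hα
        have hpos := (hrelp α hαKP).2.1
        have hrest : 0 ≤ ∑ ρ ∈ L.erase α, rel ρ α := by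
          apply Finset.sum_nonneg
          intro ρ hρ
          obtain ⟨hρKP, hρm⟩ := hLmem ρ (Finset.mem_of_mem_erase hρ)
          exact (hrelp ρ hρKP).2.2 α (by omega) (Ne.symm (Finset.ne_of_mem_erase hρ))
        rw [ht]
        simp only
        rw [← this]
        linarith
      obtain ⟨M, hM0, hM⟩ := exists_scale ((K ∪ P).filter (fun α => rank α < m)) s t
        (fun α hα => hspos α (Finset.mem_filter.mp hα).1 (Finset.mem_filter.mp hα).2)
      refine ⟨fun α => M * s α + t α, ?_, ?_, ?_⟩
      · have expand : ∀ S : Finset V, ∑ α ∈ S, (M * s α + t α) • α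
            = M • (∑ α ∈ S, s α • α) + ∑ α ∈ S, t α • α := by
          intro S
          rw [Finset.smul_sum, ← Finset.sum_add_distrib]
          exact Finset.sum_congr rfl fun α _ => by rw [add_smul, mul_smul]
        rw [expand, expand, hseq, hteq]
      · intro α hα
        dsimp only
        rcases lt_trichotomy (rank α) m with hlt | heq | hgt
        · exact (hM α (Finset.mem_filter.mpr ⟨hα, hlt⟩)).le
        · have hαL : α ∈ L := Finset.mem_filter.mpr ⟨hα, heq⟩
          have := htpos α hαL
          have := mul_nonneg hM0 (hs0 α hα)
          linarith
        · have := htnn α hgt.le (fun hc => by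
            have := (hLmem α hc).2; omega)
          have := mul_nonneg hM0 (hs0 α hα)
          linarith
      · intro α hα hm
        dsimp only
        rcases lt_or_eq_of_le (Nat.lt_succ_iff.mp hm) with hlt | heq
        · exact hM α (Finset.mem_filter.mpr ⟨hα, hlt⟩)
        · have hαL : α ∈ L := Finset.mem_filter.mpr ⟨hα, heq⟩
          have := htpos α hαL
          have := mul_nonneg hM0 (hs0 α hα)
          linarith
  obtain ⟨s, hseq, _, hspos⟩ := key N
  exact ⟨s, fun α hα => hspos α hα (hN α hα), hseq⟩

end Aux



/-- Solvability of the balanced equation (algebraic core of Theorem 3.1).  Let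
R = R_𝔨 ∪ R_𝔭 be the compact/noncompact partition of the root system of a complex simple
Lie algebra with symmetric decomposition 𝔤 = 𝔨 ⊕ 𝔭, with base Π = {b i} (linearly
independent), positive roots being the nonnegative integral combinations of the b i, and
`Rkpos`, `Rppos` the sets of positive compact resp. noncompact roots.  Assume:
condition (*) — every noncompact simple root ψ admits a noncompact simple root ψ' with
ψ + ψ' a root — and the root-theoretic consequence of the vanishing of the centralizer
of 𝔭 in 𝔨 (`hcent`).  Then there are strictly positive reals g_α with
Σ_{α ∈ R_𝔨⁺} g_α α = Σ_{α ∈ R_𝔭⁺} g_α α. -/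
theorem balanced_equation_has_positive_solution
    {V : Type*} [AddCommGroup V] [Module ℝ V] {ι : Type*} [Fintype ι]
    (b : ι → V) (hb : LinearIndependent ℝ b)
    (R Rk Rp : Set V)
    (hRunion : R = Rk ∪ Rp) (hdisj : Rk ∩ Rp = ∅)
    (h0 : (0 : V) ∉ R)
    (hbase : ∀ i, b i ∈ R)
    (hnegk : ∀ α ∈ Rk, -α ∈ Rk) (hnegp : ∀ α ∈ Rp, -α ∈ Rp)
    (hsumkp : ∀ α ∈ Rk, ∀ β ∈ Rp, α + β ∈ R → α + β ∈ Rp)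
    (hsumpp : ∀ α ∈ Rp, ∀ β ∈ Rp, α + β ∈ R → α + β ∈ Rk)
    (hposneg : ∀ α ∈ R, (∃ n : ι → ℕ, α = ∑ i, (n i : ℝ) • b i) ∨
      (∃ n : ι → ℕ, -α = ∑ i, (n i : ℝ) • b i))
    (Rkpos Rppos : Finset V)
    (hRkpos : ∀ α : V, α ∈ Rkpos ↔ α ∈ Rk ∧ ∃ n : ι → ℕ, α = ∑ i, (n i : ℝ) • b i)
    (hRppos : ∀ α : V, α ∈ Rppos ↔ α ∈ Rp ∧ ∃ n : ι → ℕ, α = ∑ i, (n i : ℝ) • b i)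
    (hstar : ∀ i, b i ∈ Rp → ∃ i', b i' ∈ Rp ∧ b i + b i' ∈ R)
    (hcent : ∀ i, b i ∈ Rk → ∃ γ ∈ Rp, b i + γ ∈ R) :
    ∃ g : V → ℝ, (∀ α ∈ Rkpos, 0 < g α) ∧ (∀ α ∈ Rppos, 0 < g α) ∧
      ∑ α ∈ Rkpos, g α • α = ∑ α ∈ Rppos, g α • α := by
  classical
  rw [Set.eq_empty_iff_forall_notMem] at hdisj
  set rk : V → ℕ := fun ρ =>
    if ρ ∈ Rppos then (if ∃ i, ρ = b i then 0 else 1)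
    else (if ∃ i, ρ = b i then 2 else 3) with hrk
  have hlin : ∀ c : ι → ℝ, ∑ i, c i • b i = 0 → ∀ i, c i = 0 :=
    Fintype.linearIndependent_iff.mp hb
  have hsingle : ∀ k : ι, (∑ j, (if j = k then (1:ℝ) else 0) • b j) = b k := by
    intro k
    simp only [ite_smul, zero_smul, one_smul]
    rw [Finset.sum_ite_eq' Finset.univ k b]
    simp
  have hbmem : ∀ i : ι, ∃ n : ι → ℕ, b i = ∑ j, (n j : ℝ) • b j := by
    intro i
    refine ⟨fun j => if j = i then 1 else 0, ?_⟩
    rw [← hsingle i]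
    refine Finset.sum_congr rfl fun j _ => ?_
    split_ifs <;> simp_all
  have hKmem : ∀ i, b i ∈ Rk → b i ∈ Rkpos := fun i h => (hRkpos _).mpr ⟨h, hbmem i⟩
  have hPmem : ∀ i, b i ∈ Rp → b i ∈ Rppos := fun i h => (hRppos _).mpr ⟨h, hbmem i⟩
  have hKPdisj : ∀ α : V, α ∈ Rkpos → α ∈ Rppos → False := by
    intro α h1 h2
    exact hdisj α ⟨((hRkpos α).mp h1).1, ((hRppos α).mp h2).1⟩
  have hRp' : ∀ α ∈ Rp, α ∈ R := fun α h => hRunion ▸ Set.mem_union_right _ h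
  have hpos_of : ∀ γ ∈ Rp, ∃ σ ∈ Rppos, γ = σ ∨ γ = -σ := by
    intro γ hγ
    rcases hposneg γ (hRp' γ hγ) with ⟨n, hn⟩ | ⟨n, hn⟩
    · exact ⟨γ, (hRppos γ).mpr ⟨hγ, n, hn⟩, Or.inl rfl⟩
    · exact ⟨-γ, (hRppos _).mpr ⟨hnegp γ hγ, n, hn⟩, Or.inr (neg_neg γ).symm⟩
  have hrkP : ∀ α ∈ Rppos, rk α ≤ 1 := by
    intro α h
    simp only [hrk]
    rw [if_pos h]
    split <;> omega
  have hrk0 : ∀ i, b i ∈ Rppos → rk (b i) = 0 := by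
    intro i h
    simp only [hrk]
    rw [if_pos h, if_pos ⟨i, rfl⟩]
  have hrk2 : ∀ i, b i ∉ Rppos → rk (b i) = 2 := by
    intro i h
    simp only [hrk]
    rw [if_neg h, if_pos ⟨i, rfl⟩]
  have hnest : ∀ (S : Finset V) (I : Finset ι) (c : ι → ℝ),
      ∑ α ∈ S, (∑ i ∈ I, if α = b i then c i else 0) • α
        = ∑ i ∈ I, (if b i ∈ S then c i • b i else 0) := by
    intro S I c
    rw [Finset.sum_congr rfl fun α _ =>
      (Finset.sum_smul : (∑ i ∈ I, if α = b i then c i else 0) • α = _)]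
    rw [Finset.sum_comm]
    exact Finset.sum_congr rfl fun i _ => sum_if_smul S (b i) (c i)
  have expand3 : ∀ (S : Finset V) (v1 v2 v3 : V) (c1 c2 c3 : ℝ),
      ∑ α ∈ S, ((if α = v1 then c1 else 0) + (if α = v2 then c2 else 0)
          + (if α = v3 then c3 else 0)) • α
        = (if v1 ∈ S then c1 • v1 else 0) + (if v2 ∈ S then c2 • v2 else 0)
          + (if v3 ∈ S then c3 • v3 else 0) := by
    intro S v1 v2 v3 c1 c2 c3
    rw [← sum_if_smul S v1 c1, ← sum_if_smul S v2 c2, ← sum_if_smul S v3 c3,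
      ← Finset.sum_add_distrib, ← Finset.sum_add_distrib]
    exact Finset.sum_congr rfl fun α _ => by rw [add_smul, add_smul]
  have main : ∀ ρ ∈ Rkpos ∪ Rppos, ∃ r : V → ℝ,
      (∑ α ∈ Rkpos, r α • α = ∑ α ∈ Rppos, r α • α) ∧ 0 < r ρ ∧
      ∀ α, rk ρ ≤ rk α → α ≠ ρ → 0 ≤ r α := by
    intro ρ hρ
    by_cases hρP : ρ ∈ Rppos
    · obtain ⟨hρRp, nρ, hnρ⟩ := (hRppos ρ).mp hρP
      by_cases hsimp : ∃ i, ρ = b i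
      · -- Stage 1 : noncompact simple root
        obtain ⟨i, rfl⟩ := hsimp
        obtain ⟨i', hi'Rp, hsumR⟩ := hstar i hρRp
        have hμk : b i + b i' ∈ Rk := hsumpp _ hρRp _ hi'Rp hsumR
        have hμK : b i + b i' ∈ Rkpos := by
          refine (hRkpos _).mpr ⟨hμk,
            ⟨fun j => (if j = i then 1 else 0) + (if j = i' then 1 else 0), ?_⟩⟩
          have hcast : ∀ j : ι,
              ((((if j = i then 1 else 0) + (if j = i' then 1 else 0) : ℕ)) : ℝ) • b j
              = (if j = i then (1:ℝ) else 0) • b j + (if j = i' then (1:ℝ) else 0) • b j := by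
            intro j
            rw [← add_smul]
            congr 1
            split_ifs <;> norm_num
          rw [Finset.sum_congr rfl fun j _ => hcast j, Finset.sum_add_distrib,
            hsingle, hsingle]
        have hi'P : b i' ∈ Rppos := hPmem i' hi'Rp
        set μ := b i + b i' with hμ
        refine ⟨fun α => (if α = μ then 1 else 0) + (if α = b i then 1 else 0)
          + (if α = b i' then 1 else 0), ?_, ?_, ?_⟩
        · dsimp only
          rw [expand3, expand3]
          rw [if_pos hμK, if_neg (fun h => hKPdisj _ h hρP),
            if_neg (fun h => hKPdisj _ h hi'P),
            if_neg (fun h => hKPdisj _ hμK h), if_pos hρP, if_pos hi'P]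
          simp only [one_smul, add_zero, zero_add, hμ]
        · dsimp only
          have h1 : b i ≠ μ := fun h => hKPdisj μ hμK (h ▸ hρP)
          rw [if_neg h1, if_pos rfl]
          split_ifs <;> norm_num
        · intro α _ _
          dsimp only
          split_ifs <;> norm_num
      · -- Stage 2 : positive noncompact root, not simple
        have hrkρ : rk ρ = 1 := by
          simp only [hrk]
          rw [if_pos hρP, if_neg hsimp]
        set Ic := Finset.univ.filter (fun i : ι => b i ∈ Rk) with hIc
        set In := Finset.univ.filter (fun i : ι => ¬ b i ∈ Rk) with hIn
        have hInp : ∀ i ∈ In, b i ∈ Rp := by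
          intro i hi
          have hh := hbase i
          rw [hRunion] at hh
          rcases hh with h | h
          · exact absurd h (Finset.mem_filter.mp hi).2
          · exact h
        have hIck : ∀ i ∈ Ic, b i ∈ Rk := fun i hi => (Finset.mem_filter.mp hi).2
        refine ⟨fun α => (if α = ρ then 1 else 0)
            + (∑ i ∈ Ic, if α = b i then (nρ i : ℝ) else 0)
            - (∑ i ∈ In, if α = b i then (nρ i : ℝ) else 0), ?_, ?_, ?_⟩
        · dsimp only
          have expand : ∀ S : Finset V, (∑ α ∈ S, ((if α = ρ then (1:ℝ) else 0)
                + (∑ i ∈ Ic, if α = b i then (nρ i : ℝ) else 0)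
                - (∑ i ∈ In, if α = b i then (nρ i : ℝ) else 0)) • α)
              = (if ρ ∈ S then (1:ℝ) • ρ else 0)
                + (∑ i ∈ Ic, if b i ∈ S then (nρ i : ℝ) • b i else 0)
                - (∑ i ∈ In, if b i ∈ S then (nρ i : ℝ) • b i else 0) := by
            intro S
            rw [← sum_if_smul S ρ 1, ← hnest S Ic (fun i => (nρ i : ℝ)),
              ← hnest S In (fun i => (nρ i : ℝ)),
              ← Finset.sum_add_distrib, ← Finset.sum_sub_distrib]
            exact Finset.sum_congr rfl fun α _ => by rw [sub_smul, add_smul]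
          rw [expand, expand]
          have e1 : (∑ i ∈ Ic, if b i ∈ Rkpos then (nρ i : ℝ) • b i else 0)
              = ∑ i ∈ Ic, (nρ i : ℝ) • b i :=
            Finset.sum_congr rfl fun i hi => if_pos (hKmem i (hIck i hi))
          have e2 : (∑ i ∈ In, if b i ∈ Rkpos then (nρ i : ℝ) • b i else 0) = 0 :=
            Finset.sum_eq_zero fun i hi =>
              if_neg fun h => hKPdisj _ h (hPmem i (hInp i hi))
          have e3 : (∑ i ∈ Ic, if b i ∈ Rppos then (nρ i : ℝ) • b i else 0) = 0 :=
            Finset.sum_eq_zero fun i hi =>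
              if_neg fun h => hKPdisj _ (hKmem i (hIck i hi)) h
          have e4 : (∑ i ∈ In, if b i ∈ Rppos then (nρ i : ℝ) • b i else 0)
              = ∑ i ∈ In, (nρ i : ℝ) • b i :=
            Finset.sum_congr rfl fun i hi => if_pos (hPmem i (hInp i hi))
          rw [e1, e2, e3, e4, if_neg (fun h => hKPdisj _ h hρP), if_pos hρP]
          have e5 : (∑ i ∈ Ic, (nρ i : ℝ) • b i) + (∑ i ∈ In, (nρ i : ℝ) • b i) = ρ := by
            rw [hIc, hIn, Finset.sum_filter_add_sum_filter_not]
            exact hnρ.symm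
          rw [one_smul, ← e5]
          abel
        · dsimp only
          rw [if_pos rfl]
          have z1 : (∑ i ∈ Ic, if ρ = b i then (nρ i : ℝ) else 0) = 0 :=
            Finset.sum_eq_zero fun i _ => if_neg fun h => hsimp ⟨i, h⟩
          have z2 : (∑ i ∈ In, if ρ = b i then (nρ i : ℝ) else 0) = 0 :=
            Finset.sum_eq_zero fun i _ => if_neg fun h => hsimp ⟨i, h⟩
          rw [z1, z2]
          norm_num
        · intro α hα hne
          dsimp only
          rw [hrkρ] at hα
          have z : (∑ i ∈ In, if α = b i then (nρ i : ℝ) else 0) = 0 := by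
            refine Finset.sum_eq_zero fun i hi => ?_
            refine if_neg fun h => ?_
            have h0' := hrk0 i (hPmem i (hInp i hi))
            rw [h] at hα
            omega
          rw [z]
          have hIcnn : 0 ≤ ∑ i ∈ Ic, if α = b i then (nρ i : ℝ) else 0 :=
            Finset.sum_nonneg fun i _ => by
              split
              · exact Nat.cast_nonneg _
              · exact le_refl 0
          split_ifs <;> linarith
    · -- ρ ∈ Rkpos
      have hρK : ρ ∈ Rkpos := by
        rcases Finset.mem_union.mp hρ with h | h
        · exact h
        · exact absurd h hρP
      obtain ⟨hρRk, nρ, hnρ⟩ := (hRkpos ρ).mp hρK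
      by_cases hsimp : ∃ i, ρ = b i
      · -- Stage 3 : compact simple root
        obtain ⟨j, rfl⟩ := hsimp
        have hrkρ : rk (b j) = 2 := hrk2 j hρP
        obtain ⟨γ, hγRp, hγR⟩ := hcent j hρRk
        have hτRp0 : b j + γ ∈ Rp := hsumkp _ hρRk _ hγRp hγR
        obtain ⟨σ, hσP, hγσ⟩ := hpos_of γ hγRp
        obtain ⟨τ, hτP, hγτ⟩ := hpos_of (b j + γ) hτRp0
        have hbjσ : b j ≠ σ := fun h => hKPdisj (b j) hρK (h ▸ hσP)
        have hbjτ : b j ≠ τ := fun h => hKPdisj (b j) hρK (h ▸ hτP)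
        obtain ⟨hσRp, nσ, hσrep⟩ := (hRppos σ).mp hσP
        obtain ⟨hτRp', nτ, hτrep⟩ := (hRppos τ).mp hτP
        rcases hγσ with hγσ | hγσ
        · rcases hγτ with hγτ | hγτ
          · -- b j = τ - σ
            have heqn : b j = τ - σ := by
              rw [← hγτ, hγσ]
              abel
            refine ⟨fun α => (if α = b j then 1 else 0) + (if α = τ then 1 else 0)
              + (if α = σ then (-1 : ℝ) else 0), ?_, ?_, ?_⟩
            · dsimp only
              rw [expand3, expand3]
              rw [if_pos hρK, if_neg (fun h => hKPdisj _ h hτP),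
                if_neg (fun h => hKPdisj _ h hσP),
                if_neg (fun h => hKPdisj _ hρK h), if_pos hτP, if_pos hσP]
              simp only [one_smul, add_zero, zero_add, neg_one_smul]
              rw [heqn]
              abel
            · dsimp only
              rw [if_pos rfl, if_neg hbjτ, if_neg hbjσ]
              norm_num
            · intro α hα hne
              dsimp only
              rw [hrkρ] at hα
              have hασ : α ≠ σ := by
                intro h
                have := hrkP σ hσP
                rw [h] at hα
                omega
              rw [if_neg hασ]
              split_ifs <;> norm_num
          · -- b j + σ = -τ : impossible
            exfalso
            have hzero : b j + σ + τ = 0 := by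
              rw [hγσ] at hγτ
              rw [hγτ]
              abel
            have hsum : ∑ i, ((if i = j then (1:ℝ) else 0) + (nσ i : ℝ) + (nτ i : ℝ)) • b i = 0 := by
              have hh : ∀ i : ι, ((if i = j then (1:ℝ) else 0) + (nσ i : ℝ) + (nτ i : ℝ)) • b i
                  = (if i = j then (1:ℝ) else 0) • b i + (nσ i : ℝ) • b i + (nτ i : ℝ) • b i := by
                intro i
                rw [add_smul, add_smul]
              rw [Finset.sum_congr rfl fun i _ => hh i, Finset.sum_add_distrib,
                Finset.sum_add_distrib, hsingle, ← hσrep, ← hτrep]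
              exact hzero
            have hj := hlin _ hsum j
            rw [if_pos rfl] at hj
            have h1 : (0:ℝ) ≤ (nσ j : ℝ) := Nat.cast_nonneg _
            have h2 : (0:ℝ) ≤ (nτ j : ℝ) := Nat.cast_nonneg _
            linarith
        · rcases hγτ with hγτ | hγτ
          · -- b j = σ + τ
            have heqn : b j = σ + τ := by
              rw [hγσ] at hγτ
              rw [← hγτ]
              abel
            refine ⟨fun α => (if α = b j then 1 else 0) + (if α = τ then 1 else 0)
              + (if α = σ then (1 : ℝ) else 0), ?_, ?_, ?_⟩
            · dsimp only
              rw [expand3, expand3]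
              rw [if_pos hρK, if_neg (fun h => hKPdisj _ h hτP),
                if_neg (fun h => hKPdisj _ h hσP),
                if_neg (fun h => hKPdisj _ hρK h), if_pos hτP, if_pos hσP]
              simp only [one_smul, add_zero, zero_add]
              rw [heqn]
              abel
            · dsimp only
              rw [if_pos rfl, if_neg hbjτ, if_neg hbjσ]
              norm_num
            · intro α _ _
              dsimp only
              split_ifs <;> norm_num
          · -- b j = σ - τ
            have heqn : b j = σ - τ := by
              rw [hγσ] at hγτ
              have h2 : b j - (σ - τ) = b j + -σ + τ := by abel
              have h3 : b j + -σ + τ = 0 := by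
                rw [hγτ]
                abel
              exact sub_eq_zero.mp (h2.trans h3)
            refine ⟨fun α => (if α = b j then 1 else 0) + (if α = σ then 1 else 0)
              + (if α = τ then (-1 : ℝ) else 0), ?_, ?_, ?_⟩
            · dsimp only
              rw [expand3, expand3]
              rw [if_pos hρK, if_neg (fun h => hKPdisj _ h hσP),
                if_neg (fun h => hKPdisj _ h hτP),
                if_neg (fun h => hKPdisj _ hρK h), if_pos hσP, if_pos hτP]
              simp only [one_smul, add_zero, zero_add, neg_one_smul]
              rw [heqn]
              abel
            · dsimp only
              rw [if_pos rfl, if_neg hbjσ, if_neg hbjτ]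
              norm_num
            · intro α hα hne
              dsimp only
              rw [hrkρ] at hα
              have hατ : α ≠ τ := by
                intro h
                have := hrkP τ hτP
                rw [h] at hα
                omega
              rw [if_neg hατ]
              split_ifs <;> norm_num
      · -- Stage 4 : positive compact root, not simple
        have hrkρ : rk ρ = 3 := by
          simp only [hrk]
          rw [if_neg hρP, if_neg hsimp]
        set Ic := Finset.univ.filter (fun i : ι => b i ∈ Rk) with hIc
        set In := Finset.univ.filter (fun i : ι => ¬ b i ∈ Rk) with hIn
        have hInp : ∀ i ∈ In, b i ∈ Rp := by
          intro i hi
          have hh := hbase i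
          rw [hRunion] at hh
          rcases hh with h | h
          · exact absurd h (Finset.mem_filter.mp hi).2
          · exact h
        have hIck : ∀ i ∈ Ic, b i ∈ Rk := fun i hi => (Finset.mem_filter.mp hi).2
        refine ⟨fun α => (if α = ρ then 1 else 0)
            - (∑ i ∈ Ic, if α = b i then (nρ i : ℝ) else 0)
            + (∑ i ∈ In, if α = b i then (nρ i : ℝ) else 0), ?_, ?_, ?_⟩
        · dsimp only
          have expand : ∀ S : Finset V, (∑ α ∈ S, ((if α = ρ then (1:ℝ) else 0)
                - (∑ i ∈ Ic, if α = b i then (nρ i : ℝ) else 0)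
                + (∑ i ∈ In, if α = b i then (nρ i : ℝ) else 0)) • α)
              = (if ρ ∈ S then (1:ℝ) • ρ else 0)
                - (∑ i ∈ Ic, if b i ∈ S then (nρ i : ℝ) • b i else 0)
                + (∑ i ∈ In, if b i ∈ S then (nρ i : ℝ) • b i else 0) := by
            intro S
            rw [← sum_if_smul S ρ 1, ← hnest S Ic (fun i => (nρ i : ℝ)),
              ← hnest S In (fun i => (nρ i : ℝ)),
              ← Finset.sum_sub_distrib, ← Finset.sum_add_distrib]
            exact Finset.sum_congr rfl fun α _ => by rw [add_smul, sub_smul]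
          rw [expand, expand]
          have e1 : (∑ i ∈ Ic, if b i ∈ Rkpos then (nρ i : ℝ) • b i else 0)
              = ∑ i ∈ Ic, (nρ i : ℝ) • b i :=
            Finset.sum_congr rfl fun i hi => if_pos (hKmem i (hIck i hi))
          have e2 : (∑ i ∈ In, if b i ∈ Rkpos then (nρ i : ℝ) • b i else 0) = 0 :=
            Finset.sum_eq_zero fun i hi =>
              if_neg fun h => hKPdisj _ h (hPmem i (hInp i hi))
          have e3 : (∑ i ∈ Ic, if b i ∈ Rppos then (nρ i : ℝ) • b i else 0) = 0 :=
            Finset.sum_eq_zero fun i hi =>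
              if_neg fun h => hKPdisj _ (hKmem i (hIck i hi)) h
          have e4 : (∑ i ∈ In, if b i ∈ Rppos then (nρ i : ℝ) • b i else 0)
              = ∑ i ∈ In, (nρ i : ℝ) • b i :=
            Finset.sum_congr rfl fun i hi => if_pos (hPmem i (hInp i hi))
          rw [e1, e2, e3, e4, if_pos hρK, if_neg (fun h => hKPdisj _ hρK h)]
          have e5 : (∑ i ∈ Ic, (nρ i : ℝ) • b i) + (∑ i ∈ In, (nρ i : ℝ) • b i) = ρ := by
            rw [hIc, hIn, Finset.sum_filter_add_sum_filter_not]
            exact hnρ.symm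
          rw [one_smul, ← e5]
          abel
        · dsimp only
          rw [if_pos rfl]
          have z1 : (∑ i ∈ Ic, if ρ = b i then (nρ i : ℝ) else 0) = 0 :=
            Finset.sum_eq_zero fun i _ => if_neg fun h => hsimp ⟨i, h⟩
          have z2 : (∑ i ∈ In, if ρ = b i then (nρ i : ℝ) else 0) = 0 :=
            Finset.sum_eq_zero fun i _ => if_neg fun h => hsimp ⟨i, h⟩
          rw [z1, z2]
          norm_num
        · intro α hα hne
          dsimp only
          rw [hrkρ] at hα
          have z : (∑ i ∈ Ic, if α = b i then (nρ i : ℝ) else 0) = 0 := by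
            refine Finset.sum_eq_zero fun i hi => ?_
            refine if_neg fun h => ?_
            have hbiP : b i ∉ Rppos := fun hP =>
              hdisj (b i) ⟨hIck i hi, ((hRppos _).mp hP).1⟩
            have h2' := hrk2 i hbiP
            rw [h] at hα
            omega
          rw [z]
          have hInnn : 0 ≤ ∑ i ∈ In, if α = b i then (nρ i : ℝ) else 0 :=
            Finset.sum_nonneg fun i _ => by
              split
              · exact Nat.cast_nonneg _
              · exact le_refl 0
          split_ifs <;> linarith
  have hN : ∀ α ∈ Rkpos ∪ Rppos, rk α < 4 := by
    intro α _
    simp only [hrk]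
    split_ifs <;> omega
  obtain ⟨g, hgpos, hgeq⟩ := combine Rkpos Rppos rk 4 hN main
  exact ⟨g, fun α h => hgpos α (Finset.mem_union_left _ h),
    fun α h => hgpos α (Finset.mem_union_right _ h), hgeq⟩
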